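/- Let d ≥ 1, let C ⊆ ℝ^d be a nonempty closed convex cone, and for each t ≥ 1 let ⟨·,·⟩_(t) be an inner product on ℝ^d (a symmetric positive-definite bilinear form) with associated norm ‖·‖_(t). Assume the family of norms is nonincreasing: ‖u‖_(t+1) ≤ ‖u‖_(t) for every u ∈ ℝ^d and t ≥ 1. Let (r_t)_{t≥1} be a sequence in ℝ^d, set R_0 = 0 and R_t = r_1 + ⋯ + r_t, and for each t ≥ 1 let π_(t)(R_{t-1}) denote a point of C minimizing ‖R_{t-1} − r‖_(t) over r ∈ C. If for every t ≥ 1 one has ⟨r_t, R_{t-1} − π_(t)(R_{t-1})⟩_(t) ≤ 0 (Blackwell's algorithm condition), then for every T ≥ 1, inf_{r ∈ C} ‖(1/T)·R_T − r‖_(T) ≤ (1/T)·√(∑_{t=1}^T ‖r_t‖_(t)²). -/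

import Mathlib

open Finset

/-- Guarantee of Blackwell's algorithm with time-dependent dot products:
if the family of norms is nonincreasing and the Blackwell condition holds at
each step, the distance (measured with the time-`T` norm) of the average
outcome to the closed convex cone `C` is at most
`(1/T) * sqrt (∑_{t=1}^T ‖r_t‖_(t)²)`. -/
theorem blackwell_time_dependent_guarantee
    (d : ℕ) (hd : 1 ≤ d) (C : Set (Fin d → ℝ))
    (hCne : C.Nonempty) (hCclosed : IsClosed C)
    (hCadd : ∀ z ∈ C, ∀ z' ∈ C, z + z' ∈ C)
    (hCsmul : ∀ z ∈ C, ∀ l : ℝ, 0 ≤ l → l • z ∈ C)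
    -- the time-dependent dot products
    (inn : ℕ → (Fin d → ℝ) → (Fin d → ℝ) → ℝ)
    (hsymm : ∀ t ≥ 1, ∀ u v, inn t u v = inn t v u)
    (haddl : ∀ t ≥ 1, ∀ u u' v, inn t (u + u') v = inn t u v + inn t u' v)
    (hsmul : ∀ t ≥ 1, ∀ (c : ℝ) (u v), inn t (c • u) v = c * inn t u v)
    (hposdef : ∀ t ≥ 1, ∀ u, u ≠ 0 → 0 < inn t u u)
    -- the associated norms
    (nrm : ℕ → (Fin d → ℝ) → ℝ)
    (hnrm : ∀ t ≥ 1, ∀ u, nrm t u = Real.sqrt (inn t u u))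
    -- the family of norms is nonincreasing
    (hmono : ∀ t ≥ 1, ∀ u, nrm (t + 1) u ≤ nrm t u)
    -- the outcomes and their partial sums (R 0 = 0)
    (r : ℕ → Fin d → ℝ) (R : ℕ → Fin d → ℝ)
    (hR : ∀ t, R t = ∑ s ∈ Finset.Icc 1 t, r s)
    -- `p t` is a point of `C` minimizing the `(t)`-distance to `R (t-1)`
    (p : ℕ → Fin d → ℝ)
    (hpC : ∀ t ≥ 1, p t ∈ C)
    (hpmin : ∀ t ≥ 1, ∀ q ∈ C, nrm t (R (t - 1) - p t) ≤ nrm t (R (t - 1) - q))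
    -- Blackwell's algorithm condition
    (hBlackwell : ∀ t ≥ 1, inn t (r t) (R (t - 1) - p t) ≤ 0) :
    ∀ T ≥ 1, sInf ((fun q => nrm T ((T : ℝ)⁻¹ • R T - q)) '' C) ≤
      (T : ℝ)⁻¹ * Real.sqrt (∑ t ∈ Finset.Icc 1 T, nrm t (r t) ^ 2) := by
  -- basic facts about the inner products
  have hinn0 : ∀ t, 1 ≤ t → ∀ v, inn t 0 v = 0 := by
    intro t ht v
    have := hsmul t ht 0 0 v
    simpa using this
  have hinn0r : ∀ t, 1 ≤ t → ∀ u, inn t u 0 = 0 := by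
    intro t ht u; rw [hsymm t ht]; exact hinn0 t ht u
  have hinn_nonneg : ∀ t, 1 ≤ t → ∀ u, 0 ≤ inn t u u := by
    intro t ht u
    by_cases h : u = 0
    · simp [h, hinn0 t ht]
    · exact (hposdef t ht u h).le
  have hnrm_nonneg : ∀ t, 1 ≤ t → ∀ u, 0 ≤ nrm t u := by
    intro t ht u; rw [hnrm t ht]; exact Real.sqrt_nonneg _
  have hnrm_sq : ∀ t, 1 ≤ t → ∀ u, nrm t u ^ 2 = inn t u u := by
    intro t ht u; rw [hnrm t ht, Real.sq_sqrt (hinn_nonneg t ht u)]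
  have hnrm_smul : ∀ t, 1 ≤ t → ∀ (c : ℝ) u, nrm t (c • u) = |c| * nrm t u := by
    intro t ht c u
    rw [hnrm t ht, hnrm t ht, hsmul t ht, hsymm t ht, hsmul t ht, hsymm t ht]
    rw [show c * (c * inn t u u) = c ^ 2 * inn t u u by ring]
    rw [Real.sqrt_mul (sq_nonneg c), Real.sqrt_sq_eq_abs]
  -- 0 ∈ C
  have h0C : (0 : Fin d → ℝ) ∈ C := by
    obtain ⟨z, hz⟩ := hCne
    simpa using hCsmul z hz 0 le_rfl
  -- R t = R (t-1) + r t for t ≥ 1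
  have hRstep : ∀ t, 1 ≤ t → R t = R (t - 1) + r t := by
    intro t ht
    obtain ⟨s, rfl⟩ := Nat.exists_eq_add_of_le ht
    rw [hR, hR]
    simp only [Nat.add_sub_cancel_left, Nat.add_comm 1 s]
    rw [Finset.sum_Icc_succ_top (by omega : 1 ≤ s + 1)]; simp
  -- expansion of the squared norm after one step
  have hexpand : ∀ t, 1 ≤ t →
      nrm t (R t - p t) ^ 2 ≤ nrm t (R (t - 1) - p t) ^ 2 + nrm t (r t) ^ 2 := by
    intro t ht
    have hsplit : R t - p t = (R (t - 1) - p t) + r t := by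
      rw [hRstep t ht]; abel
    set a := R (t - 1) - p t with ha
    rw [hnrm_sq t ht, hnrm_sq t ht, hnrm_sq t ht, hsplit]
    have e1 : inn t (a + r t) (a + r t)
        = inn t a a + 2 * inn t (r t) a + inn t (r t) (r t) := by
      rw [haddl t ht, hsymm t ht a (a + r t), hsymm t ht (r t) (a + r t),
        haddl t ht, haddl t ht, hsymm t ht a (r t)]
      ring
    rw [e1]
    have := hBlackwell t ht
    linarith
  -- induction: the squared distance of R (t-1) to C at time t is controlled
  have key : ∀ t, 1 ≤ t →
      nrm t (R (t - 1) - p t) ^ 2 ≤ ∑ s ∈ Finset.Icc 1 (t - 1), nrm s (r s) ^ 2 := by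
    intro t ht
    induction t, ht using Nat.le_induction with
    | base =>
      have hR0 : R 0 = 0 := by rw [hR]; simp
      have hle := hpmin 1 le_rfl 0 h0C
      have h0 : nrm 1 (R 0 - 0) = 0 := by
        rw [hR0, hnrm 1 le_rfl]
        simp [hinn0 1 le_rfl]
      have hge := hnrm_nonneg 1 le_rfl (R 0 - p 1)
      have : nrm 1 (R 0 - p 1) = 0 := le_antisymm (h0 ▸ hle) hge
      simp [this]
    | succ t ht ih =>
      have h1 : nrm (t + 1) (R t - p (t + 1)) ≤ nrm (t + 1) (R t - p t) := by
        have := hpmin (t + 1) (by omega) (p t) (hpC t ht)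
        simpa using this
      have h2 : nrm (t + 1) (R t - p t) ≤ nrm t (R t - p t) := hmono t ht _
      have h3 : nrm (t + 1) (R t - p (t + 1)) ^ 2 ≤ nrm t (R t - p t) ^ 2 := by
        have hnn := hnrm_nonneg (t + 1) (by omega) (R t - p (t + 1))
        nlinarith [h1.trans h2]
      have h4 := hexpand t ht
      have hsum : ∑ s ∈ Finset.Icc 1 t, nrm s (r s) ^ 2
          = (∑ s ∈ Finset.Icc 1 (t - 1), nrm s (r s) ^ 2) + nrm t (r t) ^ 2 := by
        obtain ⟨u, rfl⟩ := Nat.exists_eq_add_of_le ht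
        simp only [Nat.add_sub_cancel_left, Nat.add_comm 1 u]
        rw [Finset.sum_Icc_succ_top (by omega : 1 ≤ u + 1)]; simp
      simp only [Nat.add_sub_cancel]
      rw [hsum]
      linarith
  -- conclusion
  intro T hT
  have hTpos : (0 : ℝ) < (T : ℝ) := by exact_mod_cast hT
  have hTinv : (0 : ℝ) ≤ (T : ℝ)⁻¹ := by positivity
  have hq0 : (T : ℝ)⁻¹ • p T ∈ C := hCsmul (p T) (hpC T hT) _ hTinv
  have hbdd : BddBelow ((fun q => nrm T ((T : ℝ)⁻¹ • R T - q)) '' C) := by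
    refine ⟨0, ?_⟩
    rintro x ⟨q, hq, rfl⟩
    exact hnrm_nonneg T hT _
  have hmem : nrm T ((T : ℝ)⁻¹ • R T - (T : ℝ)⁻¹ • p T)
      ∈ (fun q => nrm T ((T : ℝ)⁻¹ • R T - q)) '' C := ⟨_, hq0, rfl⟩
  refine (csInf_le hbdd hmem).trans ?_
  have hscale : (T : ℝ)⁻¹ • R T - (T : ℝ)⁻¹ • p T = (T : ℝ)⁻¹ • (R T - p T) := by
    rw [smul_sub]
  rw [hscale, hnrm_smul T hT, abs_of_nonneg hTinv]
  refine mul_le_mul_of_nonneg_left ?_ hTinv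
  -- nrm T (R T - p T) ≤ sqrt of the sum
  have hbound : nrm T (R T - p T) ^ 2 ≤ ∑ t ∈ Finset.Icc 1 T, nrm t (r t) ^ 2 := by
    have h4 := hexpand T hT
    have h5 := key T hT
    have hsum : ∑ s ∈ Finset.Icc 1 T, nrm s (r s) ^ 2
        = (∑ s ∈ Finset.Icc 1 (T - 1), nrm s (r s) ^ 2) + nrm T (r T) ^ 2 := by
      obtain ⟨u, rfl⟩ := Nat.exists_eq_add_of_le hT
      simp only [Nat.add_sub_cancel_left, Nat.add_comm 1 u]
      rw [Finset.sum_Icc_succ_top (by omega : 1 ≤ u + 1)]; simp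
    rw [hsum]
    linarith
  calc nrm T (R T - p T) = Real.sqrt (nrm T (R T - p T) ^ 2) := by
        rw [Real.sqrt_sq (hnrm_nonneg T hT _)]
    _ ≤ Real.sqrt (∑ t ∈ Finset.Icc 1 T, nrm t (r t) ^ 2) :=
        Real.sqrt_le_sqrt hbound
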